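/- Let γ > 0 and σ > 0 be constants and let (x₀, y₀) ∈ D. Then the solution (x, y) of the SIR system x' = -γ σ x y, y' = γ σ x y - γ y with (x(0), y(0)) = (x₀, y₀) exists for all t ≥ 0, x is strictly decreasing, y(t) → 0 as t → ∞, and x(t) converges as t → ∞ to a limit x_∞ satisfying 0 < x_∞ < 1/σ, x_∞ < x₀, and x_∞ · exp(-σ x_∞) = x₀ · exp(-σ (x₀ + y₀)). -/

import Mathlib

open Set Filter Topology

set_option maxHeartbeats 1000000 in
/-- For the SIR system with constant reproduction number `σ > 0` and recovery rate
`γ > 0` and initial condition in `D`, the solution exists for all `t ≥ 0`, the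
susceptible fraction `x` is strictly decreasing, `y(t) → 0`, and `x(t)` converges to
a limit `x∞` with `0 < x∞ < 1/σ`, `x∞ < x₀` and `x∞ e^{-σ x∞} = x₀ e^{-σ (x₀+y₀)}`. -/
theorem sir_long_time_behaviour
    (γ σ x₀ y₀ : ℝ) (hγ : 0 < γ) (hσ : 0 < σ)
    (hx₀ : 0 < x₀) (hy₀ : 0 < y₀) (hxy₀ : x₀ + y₀ ≤ 1) :
    ∃ x y : ℝ → ℝ,
      (∀ t ∈ Ici (0:ℝ), HasDerivWithinAt x (-γ * σ * x t * y t) (Ici (0:ℝ)) t) ∧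
      (∀ t ∈ Ici (0:ℝ), HasDerivWithinAt y (γ * σ * x t * y t - γ * y t) (Ici (0:ℝ)) t) ∧
      x 0 = x₀ ∧ y 0 = y₀ ∧
      StrictAntiOn x (Ici (0:ℝ)) ∧
      Tendsto y atTop (nhds 0) ∧
      ∃ xinf : ℝ, Tendsto x atTop (nhds xinf) ∧
        0 < xinf ∧ xinf < 1 / σ ∧ xinf < x₀ ∧
        xinf * Real.exp (-σ * xinf) = x₀ * Real.exp (-σ * (x₀ + y₀)) := by
  -- the conserved-quantity function g
  set E : ℝ := x₀ + y₀ with hEdef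
  have hE0 : 0 < E := by positivity
  set g : ℝ → ℝ := fun u => E - u + σ⁻¹ * (Real.log u - Real.log x₀) with hgdef
  have hgx₀ : g x₀ = y₀ := by simp [hgdef, hEdef]
  have hg_deriv : ∀ u : ℝ, 0 < u → HasDerivAt g (-1 + σ⁻¹ * u⁻¹) u := by
    intro u hu
    have h1 : HasDerivAt Real.log u⁻¹ u := Real.hasDerivAt_log (ne_of_gt hu)
    have h2 : HasDerivAt (fun u : ℝ => E - u) (-1) u := by
      simpa using ((hasDerivAt_id u).const_sub E)
    exact h2.add (((h1.sub_const (Real.log x₀)).const_mul σ⁻¹))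
  have hg_cont : ∀ u : ℝ, 0 < u → ContinuousAt g u := fun u hu =>
    (hg_deriv u hu).continuousAt
  -- the root xinf of g below x₀
  set δ : ℝ := min (x₀ / 2) (x₀ * Real.exp (-σ * (E + 1))) with hδdef
  have hδ0 : 0 < δ := by positivity
  have hδx₀ : δ < x₀ := lt_of_le_of_lt (min_le_left _ _) (by linarith)
  have hgδ : g δ < 0 := by
    have h1 : Real.log δ ≤ Real.log (x₀ * Real.exp (-σ * (E + 1))) :=
      Real.log_le_log (by positivity) (min_le_right _ _)
    rw [Real.log_mul (ne_of_gt hx₀) (ne_of_gt (Real.exp_pos _)), Real.log_exp] at h1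
    have h2 : σ⁻¹ * (Real.log δ - Real.log x₀) ≤ -(E+1) := by
      rw [inv_mul_le_iff₀ hσ]
      nlinarith
    simp only [hgdef]
    nlinarith
  set S : Set ℝ := Icc δ x₀ ∩ g ⁻¹' (Iic 0) with hSdef
  have hgS : ContinuousOn g (Icc δ x₀) := fun u hu =>
    (hg_cont u (lt_of_lt_of_le hδ0 hu.1)).continuousWithinAt
  have hS_closed : IsClosed S := hgS.preimage_isClosed_of_isClosed isClosed_Icc isClosed_Iic
  have hS_ne : S.Nonempty := ⟨δ, ⟨le_refl _, le_of_lt hδx₀⟩, le_of_lt hgδ⟩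
  have hS_bdd : BddAbove S := BddAbove.mono (inter_subset_left) bddAbove_Icc
  set xinf : ℝ := sSup S with hxinfdef
  have hxinf_mem : xinf ∈ S := hS_closed.csSup_mem hS_ne hS_bdd
  have hxinf_pos : 0 < xinf := lt_of_lt_of_le hδ0 hxinf_mem.1.1
  have hxinf_le : xinf ≤ x₀ := hxinf_mem.1.2
  have hxinf_lt : xinf < x₀ := by
    rcases lt_or_eq_of_le hxinf_le with h | h
    · exact h
    · exfalso; have := hxinf_mem.2; rw [h] at this; simp [hgx₀] at this; linarith
  have hδ_le : δ ≤ xinf := le_csSup hS_bdd ⟨⟨le_refl _, le_of_lt hδx₀⟩, le_of_lt hgδ⟩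
  -- g is positive strictly above xinf (up to x₀)
  have hg_pos : ∀ u, xinf < u → u ≤ x₀ → 0 < g u := by
    intro u hu hux
    by_contra h
    push_neg at h
    have : u ∈ S := ⟨⟨le_trans hδ_le (le_of_lt hu), hux⟩, h⟩
    exact absurd (le_csSup hS_bdd this) (not_le.mpr hu)
  -- g xinf = 0
  have hg_xinf : g xinf = 0 := by
    rcases lt_trichotomy (g xinf) 0 with h | h | h
    · exfalso
      have hev : ∀ᶠ u in 𝓝[>] xinf, g u < 0 :=
        nhdsWithin_le_nhds ((hg_cont xinf hxinf_pos).eventually_lt_const h)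
      have hev2 : ∀ᶠ u in 𝓝[>] xinf, u < x₀ :=
        nhdsWithin_le_nhds (Filter.Tendsto.eventually_lt_const hxinf_lt (fun ⦃U⦄ a => a))
      have hev3 : ∀ᶠ u in 𝓝[>] xinf, xinf < u := eventually_mem_nhdsWithin
      obtain ⟨u, h1, h2, h3⟩ := (hev.and (hev2.and hev3)).exists
      exact absurd (hg_pos u h3 (le_of_lt h2)) (not_lt.mpr (le_of_lt h1))
    · exact h
    · exact absurd hxinf_mem.2 (not_le.mpr h)
  -- xinf < 1/σ
  have hxinf_σ : xinf < 1 / σ := by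
    by_contra h
    push_neg at h
    have hanti : StrictAntiOn g (Icc xinf x₀) := by
      apply strictAntiOn_of_deriv_neg (convex_Icc _ _)
      · exact fun u hu => (hg_cont u (lt_of_lt_of_le hxinf_pos hu.1)).continuousWithinAt
      · intro u hu
        rw [interior_Icc] at hu
        have hu0 : 0 < u := lt_trans hxinf_pos hu.1
        rw [(hg_deriv u hu0).deriv]
        have h1u : 1 < σ * u := by
          have h2 : 1 / σ < u := lt_of_le_of_lt h hu.1
          calc 1 = σ * (1 / σ) := by field_simp
          _ < σ * u := by nlinarith
        have : σ⁻¹ * u⁻¹ < 1 := by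
          rw [← mul_inv]
          exact inv_lt_one_of_one_lt₀ h1u
        linarith
    have := hanti ⟨le_refl _, le_of_lt hxinf_lt⟩ ⟨le_of_lt hxinf_lt, le_refl _⟩ hxinf_lt
    rw [hg_xinf, hgx₀] at this
    linarith
  -- choose x₁ > x₀ with g > 0 on [x₀, x₁]
  obtain ⟨ε, hε0, hε⟩ : ∃ ε > 0, ∀ u, |u - x₀| < ε → 0 < g u := by
    have h := (hg_cont x₀ hx₀).eventually_const_lt (by rw [hgx₀]; exact hy₀)
    rw [Metric.eventually_nhds_iff] at h
    obtain ⟨ε, hε0, hε⟩ := h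
    exact ⟨ε, hε0, fun u hu => hε (by simpa [Real.dist_eq] using hu)⟩
  set x₁ : ℝ := x₀ + ε / 2 with hx₁def
  have hx₀x₁ : x₀ < x₁ := by simp [hx₁def]; linarith
  have hgx₁ : ∀ u, x₀ ≤ u → u ≤ x₁ → 0 < g u := by
    intro u h1 h2
    apply hε
    rw [abs_lt]
    constructor <;> simp [hx₁def] at h2 ⊢ <;> linarith
  set U : Set ℝ := Ioo xinf x₁ with hUdef
  have hU_open : IsOpen U := isOpen_Ioo
  have hx₀U : x₀ ∈ U := ⟨hxinf_lt, hx₀x₁⟩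
  have hU_pos : ∀ u ∈ U, 0 < u := fun u hu => lt_trans hxinf_pos hu.1
  have hgU : ∀ u ∈ U, 0 < g u := by
    intro u hu
    rcases le_or_gt u x₀ with h | h
    · exact hg_pos u hu.1 h
    · exact hgx₁ u (le_of_lt h) (le_of_lt hu.2)
  -- the velocity field F and the time function T
  set F : ℝ → ℝ := fun u => γ * σ * (u * g u) with hFdef
  have hF_pos : ∀ u ∈ U, 0 < F u := by
    intro u hu
    have := hU_pos u hu
    have := hgU u hu
    simp only [hFdef]
    positivity
  set f : ℝ → ℝ := fun u => (F u)⁻¹ with hfdef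
  have hF_cont : ContinuousOn F U := by
    intro u hu
    apply ContinuousAt.continuousWithinAt
    simp only [hFdef]
    exact (continuousAt_const.mul ((continuousAt_id).mul (hg_cont u (hU_pos u hu))))
  have hf_cont : ContinuousOn f U :=
    hF_cont.inv₀ fun u hu => ne_of_gt (hF_pos u hu)
  set T : ℝ → ℝ := fun v => ∫ u in v..x₀, f u with hTdef
  have hT_x₀ : T x₀ = 0 := by simp [hTdef]
  have hf_int : ∀ v ∈ U, IntervalIntegrable f MeasureTheory.volume v x₀ := by
    intro v hv
    apply ContinuousOn.intervalIntegrable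
    exact hf_cont.mono ((convex_Ioo _ _).ordConnected.uIcc_subset hv hx₀U)
  have hT_deriv : ∀ v ∈ U, HasDerivAt T (-(F v)⁻¹) v := by
    intro v hv
    exact intervalIntegral.integral_hasDerivAt_left (hf_int v hv)
      (hf_cont.stronglyMeasurableAtFilter hU_open v hv)
      (hf_cont.continuousAt (hU_open.mem_nhds hv))
  have hT_cont : ContinuousOn T U := fun v hv =>
    (hT_deriv v hv).continuousAt.continuousWithinAt
  have hT_anti : StrictAntiOn T U := by
    apply strictAntiOn_of_deriv_neg (convex_Ioo _ _) hT_cont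
    intro v hv
    rw [hU_open.interior_eq] at hv
    rw [(hT_deriv v hv).deriv]
    simp only [neg_neg, Left.neg_neg_iff]
    exact inv_pos.mpr (hF_pos v hv)
  -- Lipschitz-type bound for g above xinf
  set M : ℝ := σ⁻¹ * xinf⁻¹ with hMdef
  have hM0 : 0 < M := by positivity
  have hg_bound : ∀ u, xinf < u → u ≤ x₀ → g u ≤ M * (u - xinf) := by
    intro u hu hux
    have hcont : ContinuousOn g (Icc xinf u) := fun v hv =>
      (hg_cont v (lt_of_lt_of_le hxinf_pos hv.1)).continuousWithinAt
    obtain ⟨c, hc, hslope⟩ := exists_hasDerivAt_eq_slope g (fun v => -1 + σ⁻¹ * v⁻¹) hu hcont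
      (fun v hv => hg_deriv v (lt_trans hxinf_pos hv.1))
    have hgc : -1 + σ⁻¹ * c⁻¹ ≤ M := by
      have hc1 : xinf < c := hc.1
      have : c⁻¹ ≤ xinf⁻¹ := inv_anti₀ hxinf_pos (le_of_lt hc1)
      have : σ⁻¹ * c⁻¹ ≤ σ⁻¹ * xinf⁻¹ := by
        apply mul_le_mul_of_nonneg_left this (le_of_lt (by positivity))
      simp only [hMdef]; linarith
    rw [hg_xinf] at hslope
    have : (g u - 0) / (u - xinf) ≤ M := hslope ▸ hgc
    rw [div_le_iff₀ (by linarith)] at this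
    linarith
  -- bound F above linearly
  set C : ℝ := γ * σ * x₁ * M with hCdef
  have hx₁0 : 0 < x₁ := lt_trans hx₀ hx₀x₁
  have hC0 : 0 < C := mul_pos (mul_pos (mul_pos hγ hσ) hx₁0) hM0
  have hF_bound : ∀ u, xinf < u → u ≤ x₀ → F u ≤ C * (u - xinf) := by
    intro u hu hux
    have hu0 : 0 < u := lt_trans hxinf_pos hu
    have hgu : 0 < g u := hg_pos u hu hux
    have h1 : g u ≤ M * (u - xinf) := hg_bound u hu hux
    have h2 : u ≤ x₁ := le_of_lt (lt_of_le_of_lt hux hx₀x₁)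
    have hMu : 0 ≤ M * (u - xinf) := by nlinarith
    have s1 : u * g u ≤ u * (M * (u - xinf)) := mul_le_mul_of_nonneg_left h1 hu0.le
    have s2 : u * (M * (u - xinf)) ≤ x₁ * (M * (u - xinf)) := mul_le_mul_of_nonneg_right h2 hMu
    have s3 := mul_le_mul_of_nonneg_left (s1.trans s2) (le_of_lt (mul_pos hγ hσ))
    simp only [hFdef, hCdef]
    nlinarith [s3]
  -- lower bound for T
  set Φ : ℝ → ℝ := fun u => C⁻¹ * Real.log (u - xinf) with hΦdef
  have hΦ_deriv : ∀ u, xinf < u → HasDerivAt Φ (C * (u - xinf))⁻¹ u := by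
    intro u hu
    have h1 : HasDerivAt (fun u : ℝ => u - xinf) 1 u := (hasDerivAt_id u).sub_const xinf
    have h2 : HasDerivAt (fun u => Real.log (u - xinf)) ((u - xinf)⁻¹ * 1) u :=
      (Real.hasDerivAt_log (by linarith)).comp u h1
    have h3 := h2.const_mul C⁻¹
    simpa [hΦdef, mul_inv, mul_comm] using h3
  have hT_lb : ∀ v, xinf < v → v < x₀ → Φ x₀ - Φ v ≤ T v := by
    intro v hv hvx
    have hvU : v ∈ U := by rw [hUdef]; exact ⟨hv, lt_trans hvx hx₀x₁⟩
    have huIcc : ∀ u ∈ Icc v x₀, xinf < u := fun u hu => lt_of_lt_of_le hv hu.1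
    have hφ_int : IntervalIntegrable (fun u => (C * (u - xinf))⁻¹) MeasureTheory.volume v x₀ := by
      apply ContinuousOn.intervalIntegrable
      intro u hu
      rw [uIcc_of_le (le_of_lt hvx)] at hu
      have : xinf < u := huIcc u hu
      exact ((continuousAt_const.mul ((continuousAt_id).sub continuousAt_const)).inv₀
        (mul_pos hC0 (by linarith : (0:ℝ) < u - xinf)).ne').continuousWithinAt
    have hmono : ∫ u in v..x₀, (C * (u - xinf))⁻¹ ≤ ∫ u in v..x₀, f u := by
      apply intervalIntegral.integral_mono_on (le_of_lt hvx) hφ_int (hf_int v hvU)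
      intro u hu
      have hu1 : xinf < u := huIcc u hu
      have huU : u ∈ U := by rw [hUdef]; exact ⟨hu1, lt_of_le_of_lt hu.2 hx₀x₁⟩
      simp only [hfdef]
      exact inv_anti₀ (hF_pos u huU) (hF_bound u hu1 hu.2)
    have hcalc : ∫ u in v..x₀, (C * (u - xinf))⁻¹ = Φ x₀ - Φ v := by
      apply intervalIntegral.integral_eq_sub_of_hasDerivAt
      · intro u hu
        rw [uIcc_of_le (le_of_lt hvx)] at hu
        exact hΦ_deriv u (huIcc u hu)
      · exact hφ_int
    rw [hTdef]
    rw [← hcalc]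
    exact hmono
  -- T tends to infinity at xinf from the right
  have hT_top : Tendsto T (𝓝[>] xinf) atTop := by
    apply tendsto_atTop_mono' (𝓝[>] xinf) (f₁ := fun v => Φ x₀ - Φ v)
    · filter_upwards [Ioo_mem_nhdsGT_of_mem (left_mem_Ico.mpr hxinf_lt)] with v hv
      exact hT_lb v hv.1 hv.2
    · have h1 : Tendsto (fun v : ℝ => v - xinf) (𝓝[>] xinf) (𝓝[>] 0) := by
        apply tendsto_nhdsWithin_of_tendsto_nhds_of_eventually_within
        · have hb := (tendsto_id : Tendsto id (𝓝 xinf) (𝓝 xinf)).sub_const xinf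
          rw [sub_self] at hb
          exact hb.mono_left nhdsWithin_le_nhds
        · filter_upwards [eventually_mem_nhdsWithin] with v hv
          simp only [mem_Ioi] at hv ⊢; linarith
      have h2 : Tendsto (fun v => Real.log (v - xinf)) (𝓝[>] xinf) atBot :=
        Real.tendsto_log_nhdsGT_zero.comp h1
      have h3 : Tendsto (fun v => C⁻¹ * Real.log (v - xinf)) (𝓝[>] xinf) atBot :=
        h2.const_mul_atBot (inv_pos.mpr hC0)
      have h4 : Tendsto (fun v => -(C⁻¹ * Real.log (v - xinf))) (𝓝[>] xinf) atTop :=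
        tendsto_neg_atBot_atTop.comp h3
      have h5 := tendsto_atTop_add_const_left _ (Φ x₀) h4
      apply h5.congr
      intro v; simp only [hΦdef]; ring
  -- surjectivity of T onto (T x₁', ∞)
  have hsurj : ∀ x₁' : ℝ, x₁' ∈ U → ∀ t, T x₁' < t →
      ∃ v, v ∈ Ioo xinf x₁' ∧ T v = t := by
    intro x₁' hx₁' t ht
    have hx₁'inf : xinf < x₁' := by rw [hUdef] at hx₁'; exact hx₁'.1
    obtain ⟨w, hw, hwT⟩ : ∃ w, w ∈ Ioo xinf x₁' ∧ t < T w := by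
      have h1 : ∀ᶠ v in 𝓝[>] xinf, t < T v := hT_top.eventually_gt_atTop t
      have h2 : ∀ᶠ v in 𝓝[>] xinf, v ∈ Ioo xinf x₁' :=
        Ioo_mem_nhdsGT_of_mem (left_mem_Ico.mpr hx₁'inf)
      obtain ⟨w, h3, h4⟩ := (h2.and h1).exists
      exact ⟨w, h3, h4⟩
    have hwU : w ∈ U := by
      rw [hUdef] at hx₁' ⊢
      exact ⟨hw.1, lt_trans hw.2 hx₁'.2⟩
    have hIcc : Icc w x₁' ⊆ U := by
      rw [hUdef] at hx₁' ⊢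
      intro u hu
      exact ⟨lt_of_lt_of_le hw.1 hu.1, lt_of_le_of_lt hu.2 hx₁'.2⟩
    have hiv : Icc (T x₁') (T w) ⊆ T '' Icc w x₁' :=
      intermediate_value_Icc' (le_of_lt hw.2) (hT_cont.mono hIcc)
    obtain ⟨v, hv, hvt⟩ := hiv ⟨le_of_lt ht, le_of_lt hwT⟩
    refine ⟨v, ⟨lt_of_lt_of_le hw.1 hv.1, ?_⟩, hvt⟩
    rcases lt_or_eq_of_le hv.2 with h | h
    · exact h
    · exfalso; rw [h] at hvt; rw [hvt] at ht; exact lt_irrefl _ ht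
  -- the midpoint x₁' and the inverse domain V
  set x₁' : ℝ := (x₀ + x₁) / 2 with hx₁'def
  have hx₀x₁' : x₀ < x₁' := by simp only [hx₁'def]; linarith
  have hx₁'x₁ : x₁' < x₁ := by simp only [hx₁'def]; linarith
  have hx₁'U : x₁' ∈ U := by rw [hUdef]; exact ⟨lt_trans hxinf_lt hx₀x₁', hx₁'x₁⟩
  have hx₀U : x₀ ∈ U := by rw [hUdef]; exact ⟨hxinf_lt, hx₀x₁⟩
  set V : Set ℝ := Ioo xinf x₁' with hVdef
  have hVU : V ⊆ U := by
    rw [hVdef, hUdef]; exact Ioo_subset_Ioo (le_refl _) (le_of_lt hx₁'x₁)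
  set τ : ℝ := T x₁' with hτdef
  have hτ0 : τ < 0 := by
    rw [hτdef, ← hT_x₀]; exact hT_anti hx₀U hx₁'U hx₀x₁'
  have hTinj : InjOn T V := (hT_anti.injOn).mono hVU
  -- the solution x as the inverse of T
  set x : ℝ → ℝ := fun t => Function.invFunOn T V t with hxdef
  have hx_spec : ∀ t, τ < t → x t ∈ V ∧ T (x t) = t := by
    intro t ht
    obtain ⟨v, hv, hvt⟩ := hsurj x₁' hx₁'U t ht
    have hex : ∃ v ∈ V, T v = t := ⟨v, by rwa [hVdef], hvt⟩
    exact ⟨Function.invFunOn_mem hex, Function.invFunOn_eq hex⟩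
  have hx_mem : ∀ t, τ < t → x t ∈ V := fun t ht => (hx_spec t ht).1
  have hxU : ∀ t, τ < t → x t ∈ U := fun t ht => hVU (hx_mem t ht)
  have hTx : ∀ t, τ < t → T (x t) = t := fun t ht => (hx_spec t ht).2
  have hx_inv : ∀ v ∈ V, x (T v) = v := by
    intro v hv
    have hTv : τ < T v := by
      rw [hτdef]
      exact hT_anti (hVU hv) hx₁'U hv.2
    exact hTinj (hx_mem _ hTv) hv (hTx _ hTv)
  have hx_0 : x 0 = x₀ := by
    have h0 : τ < 0 := hτ0
    have : T (x 0) = T x₀ := by rw [hTx 0 h0, hT_x₀]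
    exact hTinj (hx_mem 0 h0) ⟨hxinf_lt, hx₀x₁'⟩ this
  -- x is strictly antitone on Ioi τ
  have hx_anti : ∀ s t : ℝ, τ < s → τ < t → s < t → x t < x s := by
    intro s t hs ht hst
    rcases lt_trichotomy (x t) (x s) with h | h | h
    · exact h
    · exfalso
      have := hTx s hs
      rw [← h, hTx t ht] at this
      exact absurd this (ne_of_gt hst)
    · exfalso
      have := hT_anti (hxU s hs) (hxU t ht) h
      rw [hTx s hs, hTx t ht] at this
      exact absurd this (not_lt.mpr (le_of_lt hst))
  -- continuity of x on Ioi τ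
  have hx_cont : ∀ t, τ < t → ContinuousAt x t := by
    intro t ht
    have hw : StrictMonoOn (fun s => x (-s)) (Iio (-τ)) := by
      intro s₁ hs₁ s₂ hs₂ h12
      have h1 : τ < -s₂ := by simp only [mem_Iio] at hs₂; linarith
      have h2 : τ < -s₁ := by simp only [mem_Iio] at hs₁; linarith
      exact hx_anti (-s₂) (-s₁) h1 h2 (by linarith)
    have himg : V ⊆ (fun s => x (-s)) '' (Iio (-τ)) := by
      intro v hv
      have hTv : τ < T v := hT_anti (hVU hv) hx₁'U hv.2
      exact ⟨-(T v), by simpa using hTv, by simp [hx_inv v hv]⟩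
    have hVnhds : V ∈ 𝓝 (x (- -t)) := by
      rw [neg_neg]
      exact (isOpen_Ioo).mem_nhds (hx_mem t ht)
    have hcw : ContinuousAt (fun s => x (-s)) (-t) := by
      apply hw.continuousAt_of_image_mem_nhds (Iio_mem_nhds (by simpa using ht))
      exact mem_of_superset hVnhds himg
    have : ContinuousAt (fun s : ℝ => x (- -s)) t := hcw.comp (continuous_neg.continuousAt)
    simpa [neg_neg] using this
  -- derivative of x
  have hx_deriv : ∀ t, τ < t → HasDerivAt x (-F (x t)) t := by
    intro t ht
    have h1 : HasDerivAt T (-(F (x t))⁻¹) (x t) := hT_deriv (x t) (hxU t ht)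
    have h2 : (-(F (x t))⁻¹) ≠ 0 := by
      have := hF_pos (x t) (hxU t ht)
      simp only [ne_eq, neg_eq_zero, inv_eq_zero]
      exact ne_of_gt this
    have h3 : ∀ᶠ s in 𝓝 t, T (x s) = s := by
      filter_upwards [Ioi_mem_nhds ht] with s hs
      exact hTx s hs
    have h4 := HasDerivAt.of_local_left_inverse (hx_cont t ht) h1 h2 h3
    simpa [inv_neg, inv_inv] using h4
  -- limit of x at infinity
  have hx_gt : ∀ t, τ < t → xinf < x t := fun t ht => (hx_mem t ht).1
  have hx_tendsto : Tendsto x atTop (𝓝 xinf) := by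
    rw [tendsto_order]
    constructor
    · intro a ha
      filter_upwards [Ioi_mem_atTop τ] with t ht
      exact lt_trans ha (hx_gt t ht)
    · intro a ha
      set b : ℝ := min a x₁' with hbdef
      have hb : xinf < b := lt_min ha (lt_trans hxinf_lt hx₀x₁')
      set v : ℝ := (xinf + b) / 2 with hvdef
      have hv : v ∈ V := by
        constructor
        · simp only [hvdef]; linarith
        · have : v < b := by simp only [hvdef]; linarith
          exact lt_of_lt_of_le this (min_le_right _ _)
      have hvτ : τ < T v := hT_anti (hVU hv) hx₁'U hv.2
      filter_upwards [Ioi_mem_atTop (max (T v) τ)] with t ht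
      rw [mem_Ioi, max_lt_iff] at ht
      have hxt : x t ≤ v := by
        by_contra h
        push_neg at h
        have := hT_anti (hVU hv) (hxU t ht.2) h
        rw [hTx t ht.2] at this
        exact absurd this (not_lt.mpr (le_of_lt ht.1))
      calc x t ≤ v := hxt
      _ < b := by simp only [hvdef]; linarith
      _ ≤ a := min_le_left _ _
  have hIciτ : ∀ t : ℝ, t ∈ Ici (0:ℝ) → τ < t := fun t ht => lt_of_lt_of_le hτ0 ht
  set y : ℝ → ℝ := fun t => g (x t) with hydef
  have hx_pos : ∀ t, τ < t → 0 < x t := fun t ht => hU_pos _ (hxU t ht)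
  refine ⟨x, y, ?_, ?_, hx_0, ?_, ?_, ?_, xinf, hx_tendsto, hxinf_pos, hxinf_σ, hxinf_lt, ?_⟩
  · intro t ht
    have h := (hx_deriv t (hIciτ t ht)).hasDerivWithinAt (s := Ici (0:ℝ))
    have heq : -F (x t) = -γ * σ * x t * y t := by
      simp only [hFdef, hydef]; ring
    rwa [heq] at h
  · intro t ht
    have hτt := hIciτ t ht
    have hxt := hx_pos t hτt
    have h1 := (hg_deriv (x t) hxt).comp t (hx_deriv t hτt)
    have heq : (-1 + σ⁻¹ * (x t)⁻¹) * -F (x t) = γ * σ * x t * y t - γ * y t := by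
      simp only [hFdef, hydef]
      field_simp
      ring
    rw [heq] at h1
    exact h1.hasDerivWithinAt
  · simp only [hydef, hx_0, hgx₀]
  · intro s hs t ht hst
    exact hx_anti s t (hIciτ s hs) (hIciτ t ht) hst
  · have hgc : ContinuousAt g xinf := hg_cont xinf hxinf_pos
    have := hgc.tendsto.comp hx_tendsto
    rwa [hg_xinf] at this
  · -- the transcendental identity
    have hlog : Real.log xinf + -σ * xinf = Real.log x₀ + -σ * E := by
      have h0 : E - xinf + σ⁻¹ * (Real.log xinf - Real.log x₀) = 0 := by
        have := hg_xinf
        rwa [hgdef] at this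
      have h1 : σ * (E - xinf) + (Real.log xinf - Real.log x₀) = 0 := by
        have := congrArg (fun z => σ * z) h0
        simp only [mul_zero, mul_add] at this
        rw [← this]
        field_simp
      ring_nf
      ring_nf at h1
      linarith
    calc xinf * Real.exp (-σ * xinf)
        = Real.exp (Real.log xinf + -σ * xinf) := by
          rw [Real.exp_add, Real.exp_log hxinf_pos]
      _ = Real.exp (Real.log x₀ + -σ * E) := by rw [hlog]
      _ = x₀ * Real.exp (-σ * (x₀ + y₀)) := by
          rw [Real.exp_add, Real.exp_log hx₀, hEdef]
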